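/- Let u, v be words, s the maximal common suffix of v^∞ and v^∞u. If y and z are suffixes of (possibly distinct) concatenations of u and v, both of length at least |s|, and v is a suffix of u with u, v not powers of a common word, then for any word w, the maximal common suffix of yvw and zuw equals sw. -/
import Mathlib


/-- The `k`-fold concatenation of the word `v` with itself. -/
def wpow {A : Type*} (v : List A) (k : ℕ) : List A := (List.replicate k v).flatten

/-- `s` is a (finite) suffix of the left-infinite word `x`, where `x n` denotes the
letter of `x` at distance `n` from the right end (`x 0` is the last letter). -/
def LSuffix {A : Type*} (s : List A) (x : ℕ → A) : Prop :=
  ∀ i, i < s.length → s.reverse[i]? = some (x i)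

/-- `w` is a concatenation of the words `u` and `v`. -/
def IsConcat {A : Type*} (u v w : List A) : Prop :=
  ∃ l : List (List A), (∀ x ∈ l, x = u ∨ x = v) ∧ w = l.flatten

/-- `t` is the maximal common suffix of the finite words `a` and `b`. -/
def IsMaxCommonSuffix {A : Type*} (t a b : List A) : Prop :=
  t <:+ a ∧ t <:+ b ∧ ∀ t' : List A, t' <:+ a → t' <:+ b → t'.length ≤ t.length

lemma getElem?_of_prefix' {A : Type*} {p l : List A} (h : p <+: l) {i : ℕ}
    (hi : i < p.length) : l[i]? = p[i]? := by
  rw [List.prefix_iff_eq_take.mp h, List.getElem?_take, if_pos hi]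

lemma prefix_of_getElem?' {A : Type*} {p l : List A}
    (h : ∀ i, i < p.length → l[i]? = p[i]?) : p <+: l := by
  rw [List.prefix_iff_eq_take]
  apply List.ext_getElem?
  intro i
  rw [List.getElem?_take]
  by_cases hi : i < p.length
  · rw [if_pos hi, h i hi]
  · rw [if_neg hi, List.getElem?_eq_none (by omega)]

lemma wpow_succ' {A : Type*} (v : List A) (k : ℕ) :
    wpow v (k + 1) = wpow v k ++ v := by
  rw [wpow, wpow, List.replicate_succ', List.flatten_append]
  simp

lemma wpow_length' {A : Type*} (v : List A) (k : ℕ) :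
    (wpow v k).length = k * v.length := by
  induction k with
  | zero => simp [wpow]
  | succ k ih => rw [wpow_succ', List.length_append, ih]; ring

/-- Let `s` be the maximal common suffix of `v^∞` and `v^∞u`, where `v` is a suffix
of `u` and `u, v` are not powers of a common word.  If `y` and `z` are suffixes of
concatenations of `u` and `v`, both of length at least `|s|`, then for any word `w`
the maximal common suffix of `yvw` and `zuw` is `sw`. -/
theorem max_common_suffix_append {A : Type*} (u v s : List A)
    (hv : v ≠ []) (hsuf : v <:+ u)
    (hnp : ¬ ∃ (w : List A) (t r : ℕ), 0 < t ∧ 0 < r ∧ u = wpow w t ∧ v = wpow w r)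
    (x x' : ℕ → A)
    -- `x` is the left-infinite word `v^∞`
    (hx : ∀ k : ℕ, LSuffix (wpow v k) x)
    -- `x'` is the left-infinite word `v^∞ u`
    (hx' : ∀ k : ℕ, LSuffix (wpow v k ++ u) x')
    -- `s` is the maximal common suffix of `x` and `x'`
    (hsx : LSuffix s x) (hsx' : LSuffix s x')
    (hmax : ∀ s' : List A, LSuffix s' x → LSuffix s' x' → s'.length ≤ s.length)
    (y z : List A)
    (hy : ∃ cy : List A, IsConcat u v cy ∧ y <:+ cy)
    (hz : ∃ cz : List A, IsConcat u v cz ∧ z <:+ cz)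
    (hys : s.length ≤ y.length) (hzs : s.length ≤ z.length)
    (w : List A) :
    IsMaxCommonSuffix (s ++ w) (y ++ v ++ w) (z ++ u ++ w) := by
  have hv1 : 0 < v.length := List.length_pos_iff.mpr hv
  have hvu : v.length ≤ u.length := hsuf.length_le
  have hu1 : 0 < u.length := lt_of_lt_of_le hv1 hvu
  -- `x` agrees with `v` on its last `|v|` letters
  have hxv : ∀ i, i < v.length → v.reverse[i]? = some (x i) := by
    intro i hi
    have h1 : wpow v 1 = v := by simp [wpow]
    have := hx 1 i (by rw [h1]; exact hi)
    rwa [h1] at this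
  -- `x'` agrees with `u` on its last `|u|` letters
  have hx'u : ∀ i, i < u.length → u.reverse[i]? = some (x' i) := by
    intro i hi
    have h1 : wpow v 0 ++ u = u := by simp [wpow]
    have := hx' 0 i (by rw [h1]; exact hi)
    rwa [h1] at this
  -- periodicity of `x`
  have per : ∀ i, x (i + v.length) = x i := by
    intro i
    have h1 := hx (i + 2) (i + v.length)
      (by rw [wpow_length']; nlinarith)
    have h2 := hx (i + 1) i (by rw [wpow_length']; nlinarith)
    rw [wpow_succ', List.reverse_append,
      List.getElem?_append_right (by simp)] at h1
    simp only [List.length_reverse, Nat.add_sub_cancel] at h1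
    rw [h2] at h1
    injection h1 with h
    exact h.symm
  -- `x'` shifted by `|u|` is `x`
  have hx'x : ∀ i, x' (i + u.length) = x i := by
    intro i
    have h1 := hx' (i + 1) (i + u.length)
      (by rw [List.length_append, wpow_length']; nlinarith)
    have h2 := hx (i + 1) i (by rw [wpow_length']; nlinarith)
    rw [List.reverse_append, List.getElem?_append_right (by simp)] at h1
    simp only [List.length_reverse, Nat.add_sub_cancel] at h1
    rw [h2] at h1
    injection h1 with h
    exact h.symm
  -- `x` and `x'` agree on the last `|s|` letters
  have hxx' : ∀ i, i < s.length → x i = x' i := by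
    intro i hi
    have := (hsx i hi).symm.trans (hsx' i hi)
    injection this
  -- maximality: `x` and `x'` differ at position `|s|`
  have hne : x s.length ≠ x' s.length := by
    intro he
    have key : ∀ (f : ℕ → A), x' s.length = f s.length →
        (∀ i, i < s.length → s.reverse[i]? = some (f i)) →
        LSuffix (x' s.length :: s) f := by
      intro f hf hs i hi
      rw [List.reverse_cons]
      simp only [List.length_cons] at hi
      by_cases his : i < s.length
      · rw [List.getElem?_append_left (by simpa using his)]
        exact hs i his
      · have : i = s.length := by omega
        subst this
        rw [List.getElem?_append_right (by simp)]
        simp [hf]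
    have h1 : LSuffix (x' s.length :: s) x := key x he.symm hsx
    have h2 : LSuffix (x' s.length :: s) x' := key x' rfl hsx'
    have := hmax _ h1 h2
    simp at this
  -- main structural lemma: every concatenation agrees with `x`
  -- on positions `i` with `i + |v| ≤ |s|`
  have hL : ∀ l : List (List A), (∀ b ∈ l, b = u ∨ b = v) →
      ∀ i, i < l.flatten.length → i + v.length ≤ s.length →
      l.flatten.reverse[i]? = some (x i) := by
    intro l
    induction l using List.reverseRecOn with
    | nil => intro _ i hi _; simp at hi
    | append_singleton l b ih =>
      intro hb i hi hiv
      have heq : (l ++ [b]).flatten = l.flatten ++ b := by simp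
      rw [heq] at hi ⊢
      rw [List.reverse_append]
      have hil : i < s.length := by omega
      rcases hb b (by simp) with hbu | hbv
      · subst hbu
        by_cases hiu : i < b.length
        · rw [List.getElem?_append_left (by simpa using hiu)]
          rw [hx'u i hiu, hxx' i hil]
        · push_neg at hiu
          rw [List.getElem?_append_right (by simpa using hiu)]
          simp only [List.length_reverse]
          have hj := ih (fun c hc => hb c (by simp [hc]))
            (i - b.length) (by rw [List.length_append] at hi; omega)
            (by omega)
          rw [hj]
          have : x' ((i - b.length) + b.length) = x (i - b.length) := hx'x _
          rw [Nat.sub_add_cancel hiu] at this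
          rw [← this, hxx' i hil]
      · subst hbv
        by_cases hiu : i < b.length
        · rw [List.getElem?_append_left (by simpa using hiu)]
          exact hxv i hiu
        · push_neg at hiu
          rw [List.getElem?_append_right (by simpa using hiu)]
          simp only [List.length_reverse]
          have hj := ih (fun c hc => hb c (by simp [hc]))
            (i - b.length) (by rw [List.length_append] at hi; omega)
            (by omega)
          rw [hj]
          have : x ((i - b.length) + b.length) = x (i - b.length) := per _
          rw [Nat.sub_add_cancel hiu] at this
          rw [this]
  -- `y ++ v` agrees with `x` on its last `|s| + 1` letters
  have hYV : ∀ i, i ≤ s.length → (y ++ v).reverse[i]? = some (x i) := by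
    intro i hi
    obtain ⟨cy, ⟨ly, hly, rfl⟩, hysuf⟩ := hy
    rw [List.reverse_append]
    by_cases hiv : i < v.length
    · rw [List.getElem?_append_left (by simpa using hiv)]
      exact hxv i hiv
    · push_neg at hiv
      rw [List.getElem?_append_right (by simpa using hiv)]
      simp only [List.length_reverse]
      have hj1 : i - v.length < y.length := by omega
      have hpre : y.reverse <+: ly.flatten.reverse := List.reverse_prefix.mpr hysuf
      have hval := getElem?_of_prefix' hpre (i := i - v.length) (by simpa using hj1)
      rw [← hval]
      have hj2 : i - v.length < ly.flatten.length := by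
        have := hysuf.length_le; omega
      rw [hL ly hly (i - v.length) hj2 (by omega)]
      have : x ((i - v.length) + v.length) = x (i - v.length) := per _
      rw [Nat.sub_add_cancel hiv] at this
      rw [this]
  -- `z ++ u` agrees with `x'` on its last `|s| + 1` letters
  have hZU : ∀ i, i ≤ s.length → (z ++ u).reverse[i]? = some (x' i) := by
    intro i hi
    obtain ⟨cz, ⟨lz, hlz, rfl⟩, hzsuf⟩ := hz
    rw [List.reverse_append]
    by_cases hiu : i < u.length
    · rw [List.getElem?_append_left (by simpa using hiu)]
      exact hx'u i hiu
    · push_neg at hiu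
      rw [List.getElem?_append_right (by simpa using hiu)]
      simp only [List.length_reverse]
      have hj1 : i - u.length < z.length := by omega
      have hpre : z.reverse <+: lz.flatten.reverse := List.reverse_prefix.mpr hzsuf
      have hval := getElem?_of_prefix' hpre (i := i - u.length) (by simpa using hj1)
      rw [← hval]
      have hj2 : i - u.length < lz.flatten.length := by
        have := hzsuf.length_le; omega
      rw [hL lz hlz (i - u.length) hj2 (by omega)]
      have : x' ((i - u.length) + u.length) = x (i - u.length) := hx'x _
      rw [Nat.sub_add_cancel hiu] at this
      rw [← this]
  -- `s` is a suffix of `y ++ v` and of `z ++ u`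
  have hsYV : s <:+ y ++ v := by
    rw [← List.reverse_prefix]
    apply prefix_of_getElem?'
    intro i hi
    simp only [List.length_reverse] at hi
    rw [hYV i (le_of_lt hi), hsx i hi]
  have hsZU : s <:+ z ++ u := by
    rw [← List.reverse_prefix]
    apply prefix_of_getElem?'
    intro i hi
    simp only [List.length_reverse] at hi
    rw [hZU i (le_of_lt hi), hsx' i hi]
  refine ⟨?_, ?_, ?_⟩
  · obtain ⟨t, ht⟩ := hsYV
    exact ⟨t, by rw [← List.append_assoc, ht]⟩
  · obtain ⟨t, ht⟩ := hsZU
    exact ⟨t, by rw [← List.append_assoc, ht]⟩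
  · intro t' h1 h2
    by_contra hlen
    push_neg at hlen
    rw [List.length_append] at hlen
    set i0 := w.length + s.length with hi0
    have ha := getElem?_of_prefix' (List.reverse_prefix.mpr h1) (i := i0)
      (by simp only [List.length_reverse]; omega)
    have hb := getElem?_of_prefix' (List.reverse_prefix.mpr h2) (i := i0)
      (by simp only [List.length_reverse]; omega)
    rw [List.reverse_append, List.getElem?_append_right (by simp [hi0])] at ha hb
    simp only [List.length_reverse, hi0, Nat.add_sub_cancel_left] at ha hb
    rw [hYV s.length le_rfl] at ha
    rw [hZU s.length le_rfl] at hb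
    rw [← hb] at ha
    exact hne (by injection ha)
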